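/- Let q be a prime power, n ≥ 2, h ≥ 1, and 1 ≤ i₀ ≤ n−1. Work over perfect 𝔽_q-algebras with W_h the h-truncated Witt vectors and σ the Witt-vector Frobenius. For x = (x₁,…,x_n) ∈ W_h(R)^n let g_n(x) be the matrix with columns σ^{j−1}(x), and let Y_{n,h} = {x : det g_n(x) ∈ W_h(R)^×}. For x ∈ Y_{n,h}(R) with x′ = (x_{i₀+1},…,x_n) satisfying det g_{n−i₀}(x′) ∈ W_h(R)^×, and m = (m_i(x))_{i=1}^{i₀} the vector of (n−i₀+1)×(n−i₀+1) minors of g_n(x) using rows i, i₀+1, …, n and the first n−i₀+1 columns, one has det g_{i₀}(m) ∈ W_h(R)^×. Moreover det g_{i₀}(m) = det g_n(x) · (det g_{n−i₀}(x′))^{Σ_{j=1}^{i₀−1} σ^j}. -/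
import Mathlib


/-- The `σ`-twisted Moore-type matrix of a vector `v`: its `j`-th column is
`σ^j` applied entrywise to `v`. -/
noncomputable def gmatW {S : Type*} [CommRing S] (σ : S →+* S) {r : ℕ}
    (v : Fin r → S) : Matrix (Fin r) (Fin r) S :=
  Matrix.of fun i j => (σ ^ (j : ℕ)) (v i)

/-- The vector of minors `m_i` of `gmatW σ x` with rows `i, i₀+1, …, n`
(1-indexed) and the first `n−i₀+1` columns. -/
noncomputable def minorVecW {S : Type*} [CommRing S] (σ : S →+* S) {n : ℕ}
    (i₀ : ℕ) (h : i₀ < n) (x : Fin n → S) : Fin i₀ → S := fun i =>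
  (gmatW σ (fun a : Fin (n - i₀ + 1) =>
    if (a : ℕ) = 0 then x ⟨(i : ℕ), lt_trans i.2 h⟩
    else x ⟨i₀ + (a : ℕ) - 1, by have := a.2; omega⟩)).det

/-- cofactor along the top row -/
noncomputable def cofW {S : Type*} [CommRing S] (σ : S →+* S) {r : ℕ}
    (x' : Fin r → S) (a : Fin (r + 1)) : S :=
  (-1) ^ (a : ℕ) *
    (Matrix.of fun (k b : Fin r) =>
      (σ ^ ((a.succAbove b : Fin (r + 1)) : ℕ)) (x' k)).det

theorem pow_apply_pow {S : Type*} [CommRing S] (σ : S →+* S) (i j : ℕ) (z : S) :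
    (σ ^ (i + j)) z = (σ ^ i) ((σ ^ j) z) := by
  rw [pow_add]; rfl

theorem expand_detW {S : Type*} [CommRing S] (σ : S →+* S) {r : ℕ}
    (x' : Fin r → S) (y : S) :
    (gmatW σ (Fin.cons y x')).det
      = ∑ a : Fin (r + 1), (σ ^ (a : ℕ)) y * cofW σ x' a := by
  rw [Matrix.det_succ_row_zero]
  refine Finset.sum_congr rfl fun a _ => ?_
  have hsub : (gmatW σ (Fin.cons y x')).submatrix Fin.succ a.succAbove
      = Matrix.of (fun (k b : Fin r) =>
        (σ ^ ((a.succAbove b : Fin (r + 1)) : ℕ)) (x' k)) := by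
    ext k b
    simp [gmatW, Matrix.submatrix_apply]
  rw [hsub]
  have h0 : (gmatW σ (Fin.cons y x')) 0 a = (σ ^ (a : ℕ)) y := by
    simp [gmatW]
  rw [h0, cofW]
  ring

theorem expand_det_zeroW {S : Type*} [CommRing S] (σ : S →+* S) {r : ℕ}
    (x' : Fin r → S) (k : Fin r) :
    (gmatW σ (Fin.cons (x' k) x')).det = 0 := by
  apply Matrix.det_zero_of_row_eq (i := 0) (j := k.succ) (Fin.succ_ne_zero k).symm
  funext j
  simp [gmatW]

theorem cofW_zero {S : Type*} [CommRing S] (σ : S →+* S) {r : ℕ}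
    (x' : Fin r → S) :
    cofW σ x' 0 = σ (gmatW σ x').det := by
  have h : (Matrix.of fun (k b : Fin r) =>
      (σ ^ (((0 : Fin (r+1)).succAbove b : Fin (r + 1)) : ℕ)) (x' k))
      = σ.mapMatrix (gmatW σ x') := by
    ext k b
    have hv : (((0 : Fin (r+1)).succAbove b : Fin (r + 1)) : ℕ) = 1 + (b : ℕ) := by
      simp [Fin.succAbove_zero, Nat.add_comm]
    simp only [Matrix.of_apply, RingHom.mapMatrix_apply, Matrix.map_apply, gmatW, hv,
      pow_apply_pow σ 1 (b : ℕ), pow_one]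
  rw [cofW, h, ← RingHom.map_det]
  simp

section Key

variable {S : Type*} [CommRing S] (σ : S →+* S)

/-- the auxiliary matrix `V` -/
noncomputable def VmatW (n i₀ : ℕ) (x' : Fin (n - i₀) → S) :
    Matrix (Fin n) (Fin n) S := fun t j =>
  if _h : (j : ℕ) < i₀ then
    (if hw : (j : ℕ) ≤ (t : ℕ) ∧ (t : ℕ) ≤ (j : ℕ) + (n - i₀) then
      (σ ^ (j : ℕ)) (cofW σ x' ⟨(t : ℕ) - (j : ℕ), by omega⟩)
    else 0)
  else (if (t : ℕ) = (j : ℕ) then 1 else 0)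

theorem mulV_apply_lt {n i₀ : ℕ} (hi₀ : i₀ < n) (x : Fin n → S)
    (x' : Fin (n - i₀) → S) (ρ : Fin n) (j : Fin n) (hj : (j : ℕ) < i₀) :
    (gmatW σ x * VmatW σ n i₀ x') ρ j
      = (σ ^ (j : ℕ)) ((gmatW σ (Fin.cons (x ρ) x')).det) := by
  classical
  rw [Matrix.mul_apply]
  set g : ℕ → S := fun t =>
    if hw : (j : ℕ) ≤ t ∧ t ≤ (j : ℕ) + (n - i₀) then
      (σ ^ t) (x ρ) * (σ ^ (j : ℕ)) (cofW σ x' ⟨t - (j : ℕ), by omega⟩)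
    else 0 with hg
  have hterm : ∀ t : Fin n, gmatW σ x ρ t * VmatW σ n i₀ x' t j = g (t : ℕ) := by
    intro t
    by_cases hw : (j : ℕ) ≤ (t : ℕ) ∧ (t : ℕ) ≤ (j : ℕ) + (n - i₀)
    · simp only [hg]
      simp only [VmatW, dif_pos hj, dif_pos hw]
      rfl
    · simp only [hg]
      simp only [VmatW, dif_pos hj, dif_neg hw]
      simp [gmatW]
  calc (∑ t : Fin n, gmatW σ x ρ t * VmatW σ n i₀ x' t j)
      = ∑ t : Fin n, g (t : ℕ) := Finset.sum_congr rfl fun t _ => hterm t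
    _ = ∑ t ∈ Finset.range n, g t := Fin.sum_univ_eq_sum_range g n
    _ = ∑ t ∈ Finset.Ico (j : ℕ) ((j : ℕ) + (n - i₀) + 1), g t := by
        refine (Finset.sum_subset ?_ ?_).symm
        · intro t ht
          simp only [Finset.mem_Ico] at ht
          simp only [Finset.mem_range]
          omega
        · intro t _ ht
          simp only [Finset.mem_Ico] at ht
          simp only [hg]
          exact dif_neg (by omega)
    _ = ∑ t ∈ Finset.range ((j : ℕ) + (n - i₀) + 1 - (j : ℕ)), g ((j : ℕ) + t) := by
        rw [Finset.sum_Ico_eq_sum_range]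
    _ = ∑ t ∈ Finset.range (n - i₀ + 1), g ((j : ℕ) + t) := by
        have harg : (j : ℕ) + (n - i₀) + 1 - (j : ℕ) = n - i₀ + 1 := by omega
        rw [harg]
    _ = ∑ a : Fin (n - i₀ + 1), g ((j : ℕ) + (a : ℕ)) :=
        (Fin.sum_univ_eq_sum_range (fun t => g ((j : ℕ) + t)) (n - i₀ + 1)).symm
    _ = (σ ^ (j : ℕ)) ((gmatW σ (Fin.cons (x ρ) x')).det) := by
        rw [expand_detW, map_sum]
        refine Finset.sum_congr rfl fun a _ => ?_
        simp only [hg]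
        rw [dif_pos (⟨by omega, by omega⟩ :
          (j : ℕ) ≤ (j : ℕ) + (a : ℕ) ∧ (j : ℕ) + (a : ℕ) ≤ (j : ℕ) + (n - i₀))]
        have hidx : (⟨(j : ℕ) + (a : ℕ) - (j : ℕ), by omega⟩ : Fin (n - i₀ + 1)) = a :=
          Fin.ext (by simp)
        rw [hidx, map_mul, ← pow_apply_pow σ (j : ℕ) (a : ℕ)]

theorem mulV_apply_ge {n i₀ : ℕ} (x : Fin n → S)
    (x' : Fin (n - i₀) → S) (ρ : Fin n) (j : Fin n) (hj : ¬ (j : ℕ) < i₀) :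
    (gmatW σ x * VmatW σ n i₀ x') ρ j = (σ ^ (j : ℕ)) (x ρ) := by
  classical
  rw [Matrix.mul_apply]
  rw [Finset.sum_eq_single j]
  · simp [VmatW, dif_neg hj, gmatW]
  · intro t _ htj
    have : ¬ ((t : ℕ) = (j : ℕ)) := fun h => htj (Fin.ext h)
    simp [VmatW, dif_neg hj, this]
  · intro h; exact absurd (Finset.mem_univ j) h

theorem keyW {n i₀ : ℕ} (h1 : 1 ≤ i₀) (hi₀ : i₀ < n) (x : Fin n → S)
    (x' : Fin (n - i₀) → S)
    (hx' : ∀ k : Fin (n - i₀), x' k = x ⟨i₀ + (k : ℕ), by have := k.2; omega⟩)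
    (m : Fin i₀ → S)
    (hm : ∀ i : Fin i₀,
      m i = (gmatW σ (Fin.cons (x ⟨(i : ℕ), lt_trans i.2 hi₀⟩) x')).det) :
    (gmatW σ m).det * (σ ^ i₀) ((gmatW σ x').det)
      = (gmatW σ x).det * ∏ j ∈ Finset.Icc 1 i₀, (σ ^ j) ((gmatW σ x').det) := by
  classical
  set d := (gmatW σ x').det with hd
  let e : Fin i₀ ⊕ Fin (n - i₀) ≃ Fin n :=
    finSumFinEquiv.trans (finCongr (by omega))
  have he_l : ∀ i : Fin i₀, ((e (Sum.inl i) : Fin n) : ℕ) = (i : ℕ) := by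
    intro i; simp [e]
  have he_r : ∀ k : Fin (n - i₀), ((e (Sum.inr k) : Fin n) : ℕ) = i₀ + (k : ℕ) := by
    intro k; simp [e]
  -- determinant of V
  have hdetV : (VmatW σ n i₀ x').det = ∏ j ∈ Finset.Icc 1 i₀, (σ ^ j) d := by
    rw [← Matrix.det_submatrix_equiv_self e]
    have hblock : (VmatW σ n i₀ x').submatrix e e
        = Matrix.fromBlocks
            (Matrix.of fun s j : Fin i₀ => VmatW σ n i₀ x' (e (Sum.inl s)) (e (Sum.inl j)))
            0
            (Matrix.of fun (k : Fin (n - i₀)) (j : Fin i₀) =>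
              VmatW σ n i₀ x' (e (Sum.inr k)) (e (Sum.inl j)))
            1 := by
      ext a b
      cases a with
      | inl s => cases b with
        | inl j => rfl
        | inr k =>
          simp only [Matrix.submatrix_apply, Matrix.fromBlocks_apply₁₂, Matrix.zero_apply]
          rw [VmatW, dif_neg (by rw [he_r]; omega)]
          rw [if_neg (by rw [he_l, he_r]; have := s.2; omega)]
      | inr k => cases b with
        | inl j => rfl
        | inr k' =>
          simp only [Matrix.submatrix_apply, Matrix.fromBlocks_apply₂₂]
          rw [VmatW, dif_neg (by rw [he_r]; omega)]
          rw [Matrix.one_apply]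
          by_cases hkk : k = k'
          · rw [if_pos (by rw [hkk]), if_pos hkk]
          · rw [if_neg (fun hco => hkk (Fin.ext (by
              rw [he_r, he_r] at hco; omega))), if_neg hkk]
    rw [hblock, Matrix.det_fromBlocks_zero₁₂, Matrix.det_one, mul_one]
    have htri : (Matrix.of fun s j : Fin i₀ =>
        VmatW σ n i₀ x' (e (Sum.inl s)) (e (Sum.inl j))).det
        = ∏ j : Fin i₀, (σ ^ ((j : ℕ) + 1)) d := by
      rw [Matrix.det_of_lowerTriangular]
      · refine Finset.prod_congr rfl fun j _ => ?_
        simp only [Matrix.of_apply]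
        rw [VmatW, dif_pos (by rw [he_l]; exact j.2)]
        rw [dif_pos ⟨le_refl _, Nat.le_add_right _ _⟩]
        have hidx : (⟨((e (Sum.inl j) : Fin n) : ℕ) - ((e (Sum.inl j) : Fin n) : ℕ),
            by omega⟩ : Fin (n - i₀ + 1)) = 0 := by
          apply Fin.ext; simp
        rw [hidx, cofW_zero, he_l, ← hd, pow_apply_pow σ (j : ℕ) 1, pow_one]
      · intro s j hsj
        simp only [Matrix.of_apply]
        rw [VmatW, dif_pos (by rw [he_l]; exact j.2)]
        refine dif_neg fun hco => ?_
        have h2 := hco.1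
        rw [he_l j, he_l s] at h2
        have h3 : (s : ℕ) < (j : ℕ) := hsj
        omega
    rw [htri]
    rw [Fin.prod_univ_eq_prod_range (fun j => (σ ^ (j + 1)) d) i₀]
    rw [show Finset.Icc 1 i₀ = Finset.Ico 1 (i₀ + 1) from (Finset.Ico_add_one_right_eq_Icc 1 i₀).symm]
    rw [Finset.prod_Ico_eq_prod_range]
    refine Finset.prod_congr (by norm_num) fun j _ => ?_
    rw [Nat.add_comm 1 j]
  -- determinant of A * V
  have hdetAV : (gmatW σ x * VmatW σ n i₀ x').det = (gmatW σ m).det * (σ ^ i₀) d := by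
    rw [← Matrix.det_submatrix_equiv_self e]
    have hblock : (gmatW σ x * VmatW σ n i₀ x').submatrix e e
        = Matrix.fromBlocks
            (gmatW σ m)
            (Matrix.of fun (i : Fin i₀) (k : Fin (n - i₀)) =>
              (gmatW σ x * VmatW σ n i₀ x') (e (Sum.inl i)) (e (Sum.inr k)))
            0
            ((σ ^ i₀).mapMatrix (gmatW σ x')) := by
      ext a b
      cases a with
      | inl i => cases b with
        | inl j =>
          simp only [Matrix.submatrix_apply, Matrix.fromBlocks_apply₁₁]
          rw [mulV_apply_lt σ hi₀ x x' _ _ (by rw [he_l]; exact j.2)]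
          have hrow : x (e (Sum.inl i)) = x ⟨(i : ℕ), lt_trans i.2 hi₀⟩ :=
            congrArg x (Fin.ext (he_l i))
          rw [hrow, ← hm i]
          show (σ ^ ((e (Sum.inl j) : Fin n) : ℕ)) (m i) = (σ ^ ((j : Fin i₀) : ℕ)) (m i)
          rw [he_l j]
        | inr k => rfl
      | inr k => cases b with
        | inl j =>
          simp only [Matrix.submatrix_apply, Matrix.fromBlocks_apply₂₁, Matrix.zero_apply]
          rw [mulV_apply_lt σ hi₀ x x' _ _ (by rw [he_l]; exact j.2)]
          have hrow : x (e (Sum.inr k)) = x' k := by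
            rw [hx' k]
            exact congrArg x (Fin.ext (by rw [he_r]))
          rw [hrow, expand_det_zeroW, map_zero]
        | inr k' =>
          simp only [Matrix.submatrix_apply, Matrix.fromBlocks_apply₂₂]
          rw [mulV_apply_ge σ x x' _ _ (by rw [he_r]; omega)]
          have hrow : x (e (Sum.inr k)) = x' k := by
            rw [hx' k]
            exact congrArg x (Fin.ext (by rw [he_r]))
          show (σ ^ ((e (Sum.inr k') : Fin n) : ℕ)) (x (e (Sum.inr k)))
            = (σ ^ i₀) ((σ ^ ((k' : Fin (n - i₀)) : ℕ)) (x' k))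
          rw [hrow, he_r k', pow_apply_pow σ i₀ (k' : ℕ)]
    rw [hblock, Matrix.det_fromBlocks_zero₂₁, ← RingHom.map_det, ← hd]
  rw [← hdetAV, Matrix.det_mul, hdetV]

end Key

/-- Lemma 5.4 of the paper (case of `W_h`-points).  Let `R` be a perfect
`𝔽_q`-algebra (`q = p^e`), `W_h = TruncatedWittVector p h R` with `σ` the
`q`-Frobenius (characterized by compatibility with the Witt vector Frobenius).
If `x ∈ Y_{n,h}(R)` (i.e. `det g_n(x)` is a unit) and `det g_{n−i₀}(x')` is a
unit, then `det g_{i₀}(m)` is a unit and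
`det g_{i₀}(m) = det g_n(x) · ∏_{j=1}^{i₀−1} σ^j (det g_{n−i₀}(x'))`. -/
theorem witt_det_minor_identity
    (p : ℕ) [hp : Fact p.Prime] (e q : ℕ) (he : 0 < e) (hq : q = p ^ e)
    (R : Type*) [CommRing R] [CharP R p] [Algebra (GaloisField p e) R]
    (hperf : Function.Bijective (fun a : R => a ^ p))
    (n i₀ h : ℕ) (hn : 2 ≤ n) (hh : 1 ≤ h) (h1 : 1 ≤ i₀) (hi₀ : i₀ < n)
    (σ : TruncatedWittVector p h R →+* TruncatedWittVector p h R)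
    (hσ : ∀ w : WittVector p R,
      σ (WittVector.truncate h w) =
        WittVector.truncate h
          (((WittVector.frobenius : WittVector p R →+* WittVector p R) ^ e) w))
    (x : Fin n → TruncatedWittVector p h R)
    (hx : IsUnit (gmatW σ x).det)
    (hx' : IsUnit ((gmatW σ (fun k : Fin (n - i₀) =>
        x ⟨i₀ + (k : ℕ), by have := k.2; omega⟩)).det)) :
    IsUnit (gmatW σ (minorVecW σ i₀ hi₀ x)).det ∧
    (gmatW σ (minorVecW σ i₀ hi₀ x)).det =
      (gmatW σ x).det *
        ∏ j ∈ Finset.Icc 1 (i₀ - 1),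
          (σ ^ j) ((gmatW σ (fun k : Fin (n - i₀) =>
            x ⟨i₀ + (k : ℕ), by have := k.2; omega⟩)).det) := by
  classical
  have hm : ∀ i : Fin i₀, minorVecW σ i₀ hi₀ x i
      = (gmatW σ (Fin.cons (x ⟨(i : ℕ), lt_trans i.2 hi₀⟩)
          (fun k : Fin (n - i₀) => x ⟨i₀ + (k : ℕ), by have := k.2; omega⟩))).det := by
    intro i
    have hv : (fun a : Fin (n - i₀ + 1) =>
        if (a : ℕ) = 0 then x ⟨(i : ℕ), lt_trans i.2 hi₀⟩
        else x ⟨i₀ + (a : ℕ) - 1, by have := a.2; omega⟩)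
        = Fin.cons (x ⟨(i : ℕ), lt_trans i.2 hi₀⟩)
          (fun k : Fin (n - i₀) => x ⟨i₀ + (k : ℕ), by have := k.2; omega⟩) := by
      funext a
      refine Fin.cases ?_ (fun b => ?_) a
      · simp
      · have hne : ((b.succ : Fin (n - i₀ + 1)) : ℕ) ≠ 0 := by simp
        rw [if_neg hne, Fin.cons_succ]
        exact congrArg x (Fin.ext (show i₀ + ((b : ℕ) + 1) - 1 = i₀ + (b : ℕ) by omega))
    unfold minorVecW
    rw [hv]
  have hkey := keyW σ h1 hi₀ x
    (fun k : Fin (n - i₀) => x ⟨i₀ + (k : ℕ), by have := k.2; omega⟩)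
    (fun k => rfl) (minorVecW σ i₀ hi₀ x) hm
  set D := ((gmatW σ (fun k : Fin (n - i₀) =>
      x ⟨i₀ + (k : ℕ), by have := k.2; omega⟩)).det) with hD
  have hu : ∀ j : ℕ, IsUnit ((σ ^ j) D) := fun j => hx'.map (σ ^ j)
  have hsplit : ∏ j ∈ Finset.Icc 1 i₀, (σ ^ j) D
      = (∏ j ∈ Finset.Icc 1 (i₀ - 1), (σ ^ j) D) * (σ ^ i₀) D := by
    have h2 : i₀ - 1 + 1 = i₀ := by omega
    conv_lhs => rw [← h2]
    rw [Finset.prod_Icc_succ_top (by omega : 1 ≤ i₀ - 1 + 1), h2]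
  have hcancel : (gmatW σ (minorVecW σ i₀ hi₀ x)).det
      = (gmatW σ x).det * ∏ j ∈ Finset.Icc 1 (i₀ - 1), (σ ^ j) D := by
    rw [hsplit, ← mul_assoc] at hkey
    exact (hu i₀).mul_right_cancel hkey
  refine ⟨?_, hcancel⟩
  rw [hcancel]
  refine hx.mul ?_
  refine Finset.prod_induction _ IsUnit (fun a b ha hb => ha.mul hb) isUnit_one ?_
  intro j _
  exact hx'.map (σ ^ j)
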